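/- For every real t ≥ 1 and every real x with 0 ≤ x ≤ 2, one has (1 + x/t)^t ≤ 1 + 2·t·x/((1-t)·x + 2·t), with equality when x = 0 or t = 1. -/

import Mathlib

open Real Set

/-- Weighted AM-GM consequence: `(1+u)^(t-1) * (1+(1-t)*u) ≤ 1` for `t ≥ 1`, `u ≥ 0`. -/
lemma aux_bernoulli (t u : ℝ) (ht : 1 ≤ t) (hu : 0 ≤ u) :
    (1 + u) ^ (t - 1) * (1 + (1 - t) * u) ≤ 1 := by
  set s := t - 1 with hs_def
  have hs : 0 ≤ s := by rw [hs_def]; linarith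
  have hbase : (0:ℝ) ≤ 1 + u := by linarith
  by_cases hc : 1 + (1 - t) * u ≤ 0
  · exact le_trans (mul_nonpos_of_nonneg_of_nonpos (Real.rpow_nonneg hbase _) hc) zero_le_one
  push_neg at hc
  have hs1 : (0:ℝ) < s + 1 := by linarith
  have hgm := Real.geom_mean_le_arith_mean2_weighted
    (show (0:ℝ) ≤ s / (s + 1) by positivity)
    (show (0:ℝ) ≤ 1 / (s + 1) by positivity)
    hbase hc.le
    (show s / (s + 1) + 1 / (s + 1) = 1 by field_simp)
  have hsum : s / (s + 1) * (1 + u) + 1 / (s + 1) * (1 + (1 - t) * u) = 1 := by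
    have h1t : 1 - t = -s := by rw [hs_def]; ring
    rw [h1t]; field_simp; ring
  rw [hsum] at hgm
  have hLHS : (0:ℝ) ≤ (1 + u) ^ (s / (s + 1)) * (1 + (1 - t) * u) ^ (1 / (s + 1)) :=
    mul_nonneg (Real.rpow_nonneg hbase _) (Real.rpow_nonneg hc.le _)
  have := Real.rpow_le_rpow hLHS hgm (le_of_lt hs1)
  rwa [Real.one_rpow, Real.mul_rpow (Real.rpow_nonneg hbase _) (Real.rpow_nonneg hc.le _),
    ← Real.rpow_mul hbase, ← Real.rpow_mul hc.le,
    div_mul_cancel₀ _ hs1.ne', div_mul_cancel₀ _ hs1.ne', Real.rpow_one] at this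

theorem rpow_ineq_two (t x : ℝ) (ht : 1 ≤ t) (hx0 : 0 ≤ x) (hx2 : x ≤ 2) :
    (1 + x / t) ^ t ≤ 1 + 2 * t * x / ((1 - t) * x + 2 * t) ∧
      (x = 0 ∨ t = 1 → (1 + x / t) ^ t = 1 + 2 * t * x / ((1 - t) * x + 2 * t)) := by
  have ht0 : (0:ℝ) < t := lt_of_lt_of_le one_pos ht
  constructor
  · -- main inequality
    set ψ : ℝ → ℝ := fun y => 2 * t + (1 + t) * y - (2 * t + (1 - t) * y) * (1 + y / t) ^ t
      with hψ
    have hderivAt : ∀ y : ℝ, 0 ≤ y →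
        HasDerivAt ψ
          ((1 + t) - ((1 - t) * (1 + y / t) ^ t +
            (2 * t + (1 - t) * y) * (1 / t * t * (1 + y / t) ^ (t - 1)))) y := by
      intro y hy
      have hb : (0:ℝ) < 1 + y / t := by
        have : 0 ≤ y / t := div_nonneg hy ht0.le
        linarith
      have h1 : HasDerivAt (fun y : ℝ => 1 + y / t) (1 / t) y := by
        simpa using ((hasDerivAt_id y).div_const t).const_add 1
      have h2 : HasDerivAt (fun y : ℝ => (1 + y / t) ^ t)
          (1 / t * t * (1 + y / t) ^ (t - 1)) y := h1.rpow_const (Or.inl hb.ne')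
      have h3 : HasDerivAt (fun y : ℝ => 2 * t + (1 - t) * y) (1 - t) y := by
        simpa using (((hasDerivAt_id y).const_mul (1 - t)).const_add (2 * t))
      have h5 : HasDerivAt (fun y : ℝ => 2 * t + (1 + t) * y) (1 + t) y := by
        simpa using (((hasDerivAt_id y).const_mul (1 + t)).const_add (2 * t))
      exact h5.sub (h3.mul h2)
    have hmono : MonotoneOn ψ (Icc (0:ℝ) 2) := by
      apply monotoneOn_of_deriv_nonneg (convex_Icc 0 2)
      · exact fun y hy => ((hderivAt y hy.1).continuousAt).continuousWithinAt
      · intro y hy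
        rw [interior_Icc] at hy
        exact ((hderivAt y hy.1.le).differentiableAt).differentiableWithinAt
      · intro y hy
        rw [interior_Icc] at hy
        rw [(hderivAt y hy.1.le).deriv]
        have hb : (0:ℝ) < 1 + y / t := by
          have : 0 ≤ y / t := div_nonneg hy.1.le ht0.le
          linarith
        set A := (1 + y / t) ^ (t - 1) with hA_def
        have hbt : (1 + y / t) ^ t = A * (1 + y / t) := by
          rw [hA_def, ← Real.rpow_add_one hb.ne' (t - 1)]; norm_num
        have hA : 0 ≤ A := Real.rpow_nonneg hb.le _
        have aux : A * (1 + (1 - t) * (y / t)) ≤ 1 := by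
          have := aux_bernoulli t (y / t) ht (div_nonneg hy.1.le ht0.le)
          simpa [hA_def] using this
        have aux2 : A * (t + (1 - t) * y) ≤ t := by
          have h := mul_le_mul_of_nonneg_left aux ht0.le
          have heq : t * (A * (1 + (1 - t) * (y / t))) = A * (t + (1 - t) * y) := by
            field_simp
          rw [heq] at h; linarith
        have hgoalEq : (1 - t) * ((1 + y / t) ^ t) +
            (2 * t + (1 - t) * y) * (1 / t * t * A)
            = A * (t + (1 - t) * y) * (1 + t) / t := by
          rw [hbt]; field_simp; ring
        rw [hgoalEq, sub_nonneg, div_le_iff₀ ht0]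
        nlinarith [mul_le_mul_of_nonneg_right aux2 (show (0:ℝ) ≤ 1 + t by linarith)]
    have hψ0 : ψ 0 = 0 := by simp [hψ, Real.one_rpow]
    have hψx : 0 ≤ ψ x := by
      have := hmono (left_mem_Icc.2 (by norm_num)) ⟨hx0, hx2⟩ hx0
      rwa [hψ0] at this
    have hD : (0:ℝ) < (1 - t) * x + 2 * t := by nlinarith
    have hRHS : 1 + 2 * t * x / ((1 - t) * x + 2 * t)
        = (2 * t + (1 + t) * x) / ((1 - t) * x + 2 * t) := by
      rw [eq_div_iff hD.ne', add_mul, div_mul_cancel₀ _ hD.ne']; ring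
    rw [hRHS, le_div_iff₀ hD]
    simp only [hψ] at hψx
    nlinarith [hψx]
  · -- equality cases
    rintro (rfl | rfl)
    · simp [Real.one_rpow]
    · rw [Real.rpow_one]
      norm_num
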